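/- Let a < b be reals and let f : ℝ → ℝ be a continuous function such that for every subset B ⊆ [a,b] with Lebesgue measure zero, the image f(B) is countable. Then f is constant on [a,b]. -/

import Mathlib

open MeasureTheory Set
open scoped ENNReal

lemma uncount_nat_bool : ¬ Countable (ℕ → Bool) := by
  intro h
  obtain ⟨f, hf⟩ := @exists_injective_nat (ℕ → Bool) h
  classical
  have hχ : Function.Injective (fun s : Set ℕ => fun n => decide (n ∈ s)) := by
    intro s t hst
    ext n
    have := congrFun hst n
    simpa using this
  exact Function.cantor_injective (fun s => f (fun n => decide (n ∈ s))) (hf.comp hχ)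

lemma ivt_step {g : ℝ → ℝ} (hg : Continuous g) {x y t : ℝ} (hxy : x ≤ y)
    (hx : g x < t) (ht : t ≤ g y) : ∃ z, x < z ∧ z ≤ y ∧ g z = t := by
  have h := intermediate_value_Icc hxy hg.continuousOn
  obtain ⟨z, hz, hgz⟩ := h ⟨le_of_lt hx, ht⟩
  refine ⟨z, lt_of_le_of_ne hz.1 ?_, hz.2, hgz⟩
  rintro rfl; exact absurd hgz (ne_of_lt hx)

lemma two_small {l1 l3 l5 l7 h : ℝ} (h1 : 0 ≤ l1) (h3 : 0 ≤ l3) (h5 : 0 ≤ l5)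
    (h7 : 0 ≤ l7) (hsum : l1 + l3 + l5 + l7 ≤ 3 * h) :
    (l1 ≤ h ∧ l3 ≤ h) ∨ (l1 ≤ h ∧ l5 ≤ h) ∨ (l1 ≤ h ∧ l7 ≤ h) ∨
    (l3 ≤ h ∧ l5 ≤ h) ∨ (l3 ≤ h ∧ l7 ≤ h) ∨ (l5 ≤ h ∧ l7 ≤ h) := by
  rcases le_or_gt l1 h with a | a <;> rcases le_or_gt l3 h with b | b <;>
    rcases le_or_gt l5 h with c | c <;> rcases le_or_gt l7 h with d | d <;>
    first
      | (exact Or.inl ⟨by linarith, by linarith⟩)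
      | (exact Or.inr (Or.inl ⟨by linarith, by linarith⟩))
      | (exact Or.inr (Or.inr (Or.inl ⟨by linarith, by linarith⟩)))
      | (exact Or.inr (Or.inr (Or.inr (Or.inl ⟨by linarith, by linarith⟩))))
      | (exact Or.inr (Or.inr (Or.inr (Or.inr (Or.inl ⟨by linarith, by linarith⟩)))))
      | (exact Or.inr (Or.inr (Or.inr (Or.inr (Or.inr ⟨by linarith, by linarith⟩)))))

lemma step_ex {g : ℝ → ℝ} (hg : Continuous g) {u v : ℝ} (huv : u < v)
    (hval : g u < g v) :
    ∃ p q r s : ℝ,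
      u ≤ p ∧ p < q ∧ q ≤ r ∧ r < s ∧ s ≤ v ∧
      g u ≤ g p ∧ g p < g q ∧ g q < g r ∧ g r < g s ∧ g s ≤ g v ∧
      q - p ≤ (v - u) / 3 ∧ s - r ≤ (v - u) / 3 := by
  set e := (g v - g u) / 8 with he_def
  have he : 0 < e := by simp only [he_def]; linarith
  obtain ⟨x1, hx1l, hx1r, hg1⟩ := ivt_step hg huv.le
    (show g u < g u + 1 * e by linarith) (show g u + 1 * e ≤ g v by linarith)
  obtain ⟨x2, hx2l, hx2r, hg2⟩ := ivt_step hg hx1r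
    (show g x1 < g u + 2 * e by rw [hg1]; linarith) (show g u + 2*e ≤ g v by linarith)
  obtain ⟨x3, hx3l, hx3r, hg3⟩ := ivt_step hg hx2r
    (show g x2 < g u + 3 * e by rw [hg2]; linarith) (show g u + 3*e ≤ g v by linarith)
  obtain ⟨x4, hx4l, hx4r, hg4⟩ := ivt_step hg hx3r
    (show g x3 < g u + 4 * e by rw [hg3]; linarith) (show g u + 4*e ≤ g v by linarith)
  obtain ⟨x5, hx5l, hx5r, hg5⟩ := ivt_step hg hx4r
    (show g x4 < g u + 5 * e by rw [hg4]; linarith) (show g u + 5*e ≤ g v by linarith)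
  obtain ⟨x6, hx6l, hx6r, hg6⟩ := ivt_step hg hx5r
    (show g x5 < g u + 6 * e by rw [hg5]; linarith) (show g u + 6*e ≤ g v by linarith)
  obtain ⟨x7, hx7l, hx7r, hg7⟩ := ivt_step hg hx6r
    (show g x6 < g u + 7 * e by rw [hg6]; linarith) (show g u + 7*e ≤ g v by linarith)
  have hsum : (x1 - u) + (x3 - x2) + (x5 - x4) + (x7 - x6) ≤ 3 * ((v - u) / 3) := by
    linarith
  rcases two_small (by linarith) (by linarith) (by linarith) (by linarith) hsum with
    ⟨hA, hB⟩ | ⟨hA, hB⟩ | ⟨hA, hB⟩ | ⟨hA, hB⟩ | ⟨hA, hB⟩ | ⟨hA, hB⟩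
  · exact ⟨u, x1, x2, x3, le_refl u, hx1l, hx2l.le, hx3l, by linarith, le_refl _,
      by rw [hg1]; linarith, by rw [hg1, hg2]; linarith, by rw [hg2, hg3]; linarith,
      by rw [hg3]; linarith, hA, hB⟩
  · exact ⟨u, x1, x4, x5, le_refl u, hx1l, by linarith, hx5l, by linarith, le_refl _,
      by rw [hg1]; linarith, by rw [hg1, hg4]; linarith, by rw [hg4, hg5]; linarith,
      by rw [hg5]; linarith, hA, hB⟩
  · exact ⟨u, x1, x6, x7, le_refl u, hx1l, by linarith, hx7l, by linarith, le_refl _,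
      by rw [hg1]; linarith, by rw [hg1, hg6]; linarith, by rw [hg6, hg7]; linarith,
      by rw [hg7]; linarith, hA, hB⟩
  · exact ⟨x2, x3, x4, x5, by linarith, hx3l, hx4l.le, hx5l, by linarith,
      by rw [hg2]; linarith, by rw [hg2, hg3]; linarith, by rw [hg3, hg4]; linarith,
      by rw [hg4, hg5]; linarith, by rw [hg5]; linarith, hA, hB⟩
  · exact ⟨x2, x3, x6, x7, by linarith, hx3l, by linarith, hx7l, by linarith,
      by rw [hg2]; linarith, by rw [hg2, hg3]; linarith, by rw [hg3, hg6]; linarith,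
      by rw [hg6, hg7]; linarith, by rw [hg7]; linarith, hA, hB⟩
  · exact ⟨x4, x5, x6, x7, by linarith, hx5l, hx6l.le, hx7l, by linarith,
      by rw [hg4]; linarith, by rw [hg4, hg5]; linarith, by rw [hg5, hg6]; linarith,
      by rw [hg6, hg7]; linarith, by rw [hg7]; linarith, hA, hB⟩

def GP (g : ℝ → ℝ) (p : ℝ × ℝ) : Prop := p.1 < p.2 ∧ g p.1 < g p.2

lemma children_ex {g : ℝ → ℝ} (hg : Continuous g) :
    ∀ p : ℝ × ℝ, ∃ c : (ℝ × ℝ) × (ℝ × ℝ), GP g p →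
      GP g c.1 ∧ GP g c.2 ∧ p.1 ≤ c.1.1 ∧ c.1.2 ≤ c.2.1 ∧ c.2.2 ≤ p.2 ∧
      g p.1 ≤ g c.1.1 ∧ g c.1.2 < g c.2.1 ∧ g c.2.2 ≤ g p.2 ∧
      c.1.2 - c.1.1 ≤ (p.2 - p.1) / 3 ∧ c.2.2 - c.2.1 ≤ (p.2 - p.1) / 3 := by
  intro p
  by_cases h : GP g p
  · obtain ⟨p', q', r', s', h1, h2, h3, h4, h5, h6, h7, h8, h9, h10, h11, h12⟩ :=
      step_ex hg h.1 h.2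
    exact ⟨((p', q'), (r', s')), fun _ =>
      ⟨⟨h2, h7⟩, ⟨h4, h9⟩, h1, h3, h5, h6, h8, h10, h11, h12⟩⟩
  · exact ⟨((0, 0), (0, 0)), fun hh => absurd hh h⟩

noncomputable def Dseq (F : ℝ × ℝ → (ℝ × ℝ) × (ℝ × ℝ)) (root : ℝ × ℝ)
    (σ : ℕ → Bool) : ℕ → ℝ × ℝ
  | 0 => root
  | n + 1 => if σ n then (F (Dseq F root σ n)).2 else (F (Dseq F root σ n)).1

lemma key {g : ℝ → ℝ} (hg : Continuous g) {u v : ℝ} (huv : u < v)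
    (hval : g u < g v) :
    ∃ B : Set ℝ, B ⊆ Icc u v ∧ volume B = 0 ∧ ¬ (g '' B).Countable := by
  choose F hF using children_ex hg
  set D : (ℕ → Bool) → ℕ → ℝ × ℝ := Dseq F (u, v) with hD_def
  have hzero : ∀ σ, D σ 0 = (u, v) := fun σ => rfl
  have hsucc : ∀ σ n, D σ (n + 1) =
      if σ n then (F (D σ n)).2 else (F (D σ n)).1 := fun σ n => rfl
  -- GP invariant
  have hGP : ∀ σ n, GP g (D σ n) := by
    intro σ n
    induction n with
    | zero => exact ⟨huv, hval⟩
    | succ n ih =>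
      obtain ⟨c1, c2, _, _, _, _, _, _, _, _⟩ := hF (D σ n) ih
      rw [hsucc]
      cases σ n <;> simpa
  -- nesting
  have hnest : ∀ σ n, (D σ n).1 ≤ (D σ (n + 1)).1 ∧ (D σ (n + 1)).2 ≤ (D σ n).2 ∧
      g (D σ n).1 ≤ g (D σ (n + 1)).1 ∧ g (D σ (n + 1)).2 ≤ g (D σ n).2 := by
    intro σ n
    obtain ⟨c1, c2, h3, h4, h5, h6, h7, h8, _, _⟩ := hF (D σ n) (hGP σ n)
    rw [hsucc]
    cases σ n <;> simp only [if_true, if_false, Bool.false_eq_true, ite_false, ite_true]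
    · exact ⟨h3, le_trans h4 (le_trans c2.1.le h5), h6,
        le_trans h7.le (le_trans c2.2.le h8)⟩
    · exact ⟨le_trans h3 (le_trans c1.1.le h4), h5,
        le_trans h6 (le_trans c1.2.le h7.le), h8⟩
  -- length bound
  have hlen : ∀ σ n, (D σ n).2 - (D σ n).1 ≤ (v - u) / 3 ^ n := by
    intro σ n
    induction n with
    | zero => simp [hzero]
    | succ n ih =>
      obtain ⟨c1, c2, _, _, _, _, _, _, h9, h10⟩ := hF (D σ n) (hGP σ n)
      have h3n : (0:ℝ) < 3 ^ n := by positivity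
      have key : (D σ (n+1)).2 - (D σ (n+1)).1 ≤ ((D σ n).2 - (D σ n).1) / 3 := by
        rw [hsucc]
        cases σ n <;>
          simp only [Bool.false_eq_true, if_false, if_true, ite_false, ite_true]
        · exact h9
        · exact h10
      have h2 : (v - u) / 3 ^ (n + 1) = ((v - u) / 3 ^ n) / 3 := by
        rw [pow_succ, ← div_div]
      rw [h2]
      linarith
  -- monotone sequences
  have humono : ∀ σ, Monotone (fun n => (D σ n).1) :=
    fun σ => monotone_nat_of_le_succ (fun n => (hnest σ n).1)
  have hvanti : ∀ σ, Antitone (fun n => (D σ n).2) :=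
    fun σ => antitone_nat_of_succ_le (fun n => (hnest σ n).2.1)
  have hgumono : ∀ σ, Monotone (fun n => g (D σ n).1) :=
    fun σ => monotone_nat_of_le_succ (fun n => (hnest σ n).2.2.1)
  have hgvanti : ∀ σ, Antitone (fun n => g (D σ n).2) :=
    fun σ => antitone_nat_of_succ_le (fun n => (hnest σ n).2.2.2)
  have huv' : ∀ σ m n, (D σ m).1 ≤ (D σ n).2 := by
    intro σ m n
    calc (D σ m).1 ≤ (D σ (max m n)).1 := humono σ (le_max_left m n)
      _ ≤ (D σ (max m n)).2 := (hGP σ _).1.le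
      _ ≤ (D σ n).2 := hvanti σ (le_max_right m n)
  have hguv : ∀ σ m n, g (D σ m).1 ≤ g (D σ n).2 := by
    intro σ m n
    calc g (D σ m).1 ≤ g (D σ (max m n)).1 := hgumono σ (le_max_left m n)
      _ ≤ g (D σ (max m n)).2 := (hGP σ _).2.le
      _ ≤ g (D σ n).2 := hgvanti σ (le_max_right m n)
  set x : (ℕ → Bool) → ℝ := fun σ => ⨆ n, (D σ n).1 with hx_def
  have hbdd : ∀ σ, BddAbove (range fun n => (D σ n).1) := by
    intro σ
    exact ⟨v, by rintro _ ⟨m, rfl⟩; simpa [hzero] using huv' σ m 0⟩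
  have hxl : ∀ σ n, (D σ n).1 ≤ x σ := fun σ n => le_ciSup (hbdd σ) n
  have hxr : ∀ σ n, x σ ≤ (D σ n).2 := fun σ n => ciSup_le (fun m => huv' σ m n)
  have htend : ∀ σ, Filter.Tendsto (fun n => (D σ n).1) Filter.atTop (nhds (x σ)) :=
    fun σ => tendsto_atTop_ciSup (humono σ) (hbdd σ)
  have hgtend : ∀ σ, Filter.Tendsto (fun n => g (D σ n).1) Filter.atTop
      (nhds (g (x σ))) := fun σ => (hg.tendsto _).comp (htend σ)
  have hgxl : ∀ σ n, g (D σ n).1 ≤ g (x σ) := by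
    intro σ n
    refine ge_of_tendsto (hgtend σ) ?_
    filter_upwards [Filter.eventually_ge_atTop n] with m hm
    exact hgumono σ hm
  have hgxr : ∀ σ n, g (x σ) ≤ g (D σ n).2 := by
    intro σ n
    refine le_of_tendsto (hgtend σ) ?_
    filter_upwards with m
    exact hguv σ m n
  -- agreement implies equality
  have hcongr : ∀ σ τ n, (∀ i, i < n → σ i = τ i) → D σ n = D τ n := by
    intro σ τ n
    induction n with
    | zero => intro _; rfl
    | succ n ih =>
      intro h
      have h1 : D σ n = D τ n := ih (fun i hi => h i (Nat.lt_succ_of_lt hi))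
      rw [hsucc, hsucc, h1, h (n) (Nat.lt_succ_self n)]
  -- separation
  have hlt : ∀ σ τ n, D σ n = D τ n → σ n = false → τ n = true →
      g (x σ) < g (x τ) := by
    intro σ τ n hDn hσ hτ
    obtain ⟨_, _, _, _, _, _, h7, _, _, _⟩ := hF (D σ n) (hGP σ n)
    have hσ1 : D σ (n + 1) = (F (D σ n)).1 := by rw [hsucc, hσ]; simp
    have hτ1 : D τ (n + 1) = (F (D σ n)).2 := by rw [hsucc, hτ, hDn]; simp
    calc g (x σ) ≤ g (D σ (n + 1)).2 := hgxr σ (n + 1)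
      _ = g (F (D σ n)).1.2 := by rw [hσ1]
      _ < g (F (D σ n)).2.1 := h7
      _ = g (D τ (n + 1)).1 := by rw [hτ1]
      _ ≤ g (x τ) := hgxl τ (n + 1)
  have hinj : Function.Injective (fun σ => g (x σ)) := by
    intro σ τ h
    by_contra hne
    have hex : ∃ n, σ n ≠ τ n := by
      by_contra hc
      push_neg at hc
      exact hne (funext hc)
    set n := Nat.find hex with hn_def
    have hagree : ∀ i, i < n → σ i = τ i := by
      intro i hi
      by_contra hci
      exact Nat.find_min hex hi hci
    have hDn : D σ n = D τ n := hcongr σ τ n hagree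
    have hdiff : σ n ≠ τ n := Nat.find_spec hex
    rcases Bool.eq_false_or_eq_true (σ n) with hσ | hσ <;>
      rcases Bool.eq_false_or_eq_true (τ n) with hτ | hτ
    · exact hdiff (hσ.trans hτ.symm)
    · exact absurd h.symm (ne_of_lt (hlt τ σ n hDn.symm hτ hσ))
    · exact absurd h (ne_of_lt (hlt σ τ n hDn hσ hτ))
    · exact hdiff (hσ.trans hτ.symm)
  refine ⟨range x, ?_, ?_, ?_⟩
  · rintro _ ⟨σ, rfl⟩
    exact ⟨by simpa [hzero] using hxl σ 0, by simpa [hzero] using hxr σ 0⟩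
  · -- null
    have hbound : ∀ n : ℕ, volume (range x) ≤
        ENNReal.ofReal ((2 / 3) ^ n * (v - u)) := by
      intro n
      have hsub : range x ⊆ ⋃ s : Fin n → Bool,
          Icc (D (fun i => if h : i < n then s ⟨i, h⟩ else false) n).1
              (D (fun i => if h : i < n then s ⟨i, h⟩ else false) n).2 := by
        rintro _ ⟨σ, rfl⟩
        refine mem_iUnion.2 ⟨fun i => σ i, ?_⟩
        have hDe : D (fun i => if h : i < n then σ i else false) n = D σ n := by
          apply hcongr
          intro i hi
          simp [hi]
        rw [hDe]
        exact ⟨hxl σ n, hxr σ n⟩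
      calc volume (range x)
          ≤ volume (⋃ s : Fin n → Bool, Icc _ _) := measure_mono hsub
        _ ≤ ∑ s : Fin n → Bool, volume (Icc
              (D (fun i => if h : i < n then s ⟨i, h⟩ else false) n).1
              (D (fun i => if h : i < n then s ⟨i, h⟩ else false) n).2) :=
            measure_iUnion_fintype_le _ _
        _ ≤ ∑ _s : Fin n → Bool, ENNReal.ofReal ((v - u) / 3 ^ n) := by
            apply Finset.sum_le_sum
            intro s _
            rw [Real.volume_Icc]
            exact ENNReal.ofReal_le_ofReal (hlen _ n)
        _ = (2 ^ n : ℕ) * ENNReal.ofReal ((v - u) / 3 ^ n) := by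
            rw [Finset.sum_const, Finset.card_univ]
            simp [nsmul_eq_mul]
        _ = ENNReal.ofReal ((2 / 3) ^ n * (v - u)) := by
            rw [show ((2 ^ n : ℕ) : ℝ≥0∞) = ENNReal.ofReal ((2 : ℝ) ^ n) by
              simp [ENNReal.ofReal_pow],
              ← ENNReal.ofReal_mul (by positivity)]
            congr 1
            field_simp
            rw [mul_assoc, ← mul_pow, show (3:ℝ) * (2/3) = 2 by norm_num, mul_comm]
    have htend0 : Filter.Tendsto
        (fun n : ℕ => ENNReal.ofReal ((2 / 3) ^ n * (v - u)))
        Filter.atTop (nhds 0) := by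
      have h1 : Filter.Tendsto (fun n : ℕ => (2 / 3 : ℝ) ^ n * (v - u))
          Filter.atTop (nhds 0) := by
        have := (tendsto_pow_atTop_nhds_zero_of_lt_one (by norm_num : (0:ℝ) ≤ 2/3)
          (by norm_num : (2/3 : ℝ) < 1)).mul_const (v - u)
        simpa using this
      have := (ENNReal.continuous_ofReal.tendsto 0).comp h1
      simpa [Function.comp_def] using this
    have : volume (range x) ≤ 0 := ge_of_tendsto' htend0 (fun n => hbound n)
    exact le_antisymm this (by simp)
  · -- uncountable image
    intro hC
    have himg : g '' range x = range (fun σ => g (x σ)) := by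
      rw [← range_comp]; rfl
    rw [himg] at hC
    have hCr : Countable (range (fun σ => g (x σ))) := hC.to_subtype
    have : Countable (ℕ → Bool) :=
      Countable.of_equiv _ (Equiv.ofInjective _ hinj).symm
    exact uncount_nat_bool this

theorem stmt_6 (a b : ℝ) (hab : a < b) (f : ℝ → ℝ) (hf : Continuous f)
    (hsmall : ∀ B : Set ℝ, B ⊆ Set.Icc a b → volume B = 0 → (f '' B).Countable) :
    ∃ c : ℝ, ∀ x ∈ Set.Icc a b, f x = c := by
  by_contra hc
  push_neg at hc
  obtain ⟨x0, hx0, hne⟩ := hc (f a)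
  have hax0 : a < x0 := by
    rcases eq_or_lt_of_le hx0.1 with h | h
    · exact absurd h.symm (fun hh => hne (by rw [hh]))
    · exact h
  have hIcc : Icc a x0 ⊆ Icc a b := Icc_subset_Icc le_rfl hx0.2
  rcases Ne.lt_or_gt hne with hlt | hlt
  · -- f x0 < f a : use g = -f
    obtain ⟨B, hsub, hnull, hunc⟩ := key (hf.neg) hax0
      (show -f a < -f x0 by linarith)
    have hcnt : (f '' B).Countable := hsmall B (hsub.trans hIcc) hnull
    have : ((fun t => -f t) '' B).Countable := by
      have := hcnt.image (fun y => -y)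
      rwa [Set.image_image] at this
    exact hunc this
  · -- f a < f x0 : use g = f
    obtain ⟨B, hsub, hnull, hunc⟩ := key hf hax0 hlt
    exact hunc (hsmall B (hsub.trans hIcc) hnull)
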